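/- Let G be a K_{2,2,2}-free hole-edge-disjoint simple graph, let C be a hole of G, and let e = uv be an edge of C. If S_{C,e} is empty, then the graph G − e obtained from G by deleting the edge e is a K_{2,2,2}-free hole-edge-disjoint graph whose number of holes satisfies h(G − e) ≤ h(G) − 1. -/

import Mathlib

open SimpleGraph

universe u

/-- A *hole* of a simple graph: an induced (chordless) cycle of length at least 4. -/
def IsHole {V : Type u} (G : SimpleGraph V) {v : V} (c : G.Walk v v) : Prop :=
  c.IsCycle ∧ 4 ≤ c.length ∧
    ∀ x ∈ c.support, ∀ y ∈ c.support, G.Adj x y → s(x, y) ∈ c.edges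

/-- A graph is *chordal* if it has no hole. -/
def Chordal {V : Type u} (G : SimpleGraph V) : Prop :=
  ∀ (v : V) (c : G.Walk v v), ¬ IsHole G c

/-- A graph is *hole-edge-disjoint* if any two of its holes either have the same edge set
or share no edge. -/
def HoleEdgeDisjoint {V : Type u} (G : SimpleGraph V) : Prop :=
  ∀ (u v : V) (c₁ : G.Walk u u) (c₂ : G.Walk v v), IsHole G c₁ → IsHole G c₂ →
    ({e | e ∈ c₁.edges} = {e | e ∈ c₂.edges} ∨ ∀ e ∈ c₁.edges, e ∉ c₂.edges)

/-- The complete tripartite graph `K_{2,2,2}`. -/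
def K222 : SimpleGraph (Fin 3 × Fin 2) where
  Adj a b := a.1 ≠ b.1
  symm := ⟨fun _ _ h => Ne.symm h⟩
  loopless := ⟨fun _ h => h rfl⟩

/-- A graph is `K_{2,2,2}`-free if it has no induced subgraph isomorphic to `K_{2,2,2}`. -/
def K222Free {V : Type u} (G : SimpleGraph V) : Prop :=
  ¬ ∃ f : Fin 3 × Fin 2 → V, Function.Injective f ∧
      ∀ a b, G.Adj (f a) (f b) ↔ K222.Adj a b

/-- `X_C`: the set of vertices adjacent to every vertex of the hole `C`. -/
def holeNbrs {V : Type u} (G : SimpleGraph V) {v : V} (c : G.Walk v v) : Set V :=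
  {x | ∀ y ∈ c.support, G.Adj x y}

/-- `V(C) ∪ X_C`. -/
def avoidSet {V : Type u} (G : SimpleGraph V) {v : V} (c : G.Walk v v) : Set V :=
  {x | x ∈ c.support} ∪ holeNbrs G c

/-- A `C`-avoiding path: a path none of whose internal vertices lie in `V(C) ∪ X_C`,
and, if it has length 1, at least one of its two vertices is not in `V(C) ∪ X_C`. -/
def IsCAvoidingPath {V : Type u} (G : SimpleGraph V) {v : V} (c : G.Walk v v)
    {a b : V} (W : G.Walk a b) : Prop :=
  W.IsPath ∧
    (∀ x ∈ W.support, x ≠ a → x ≠ b → x ∉ avoidSet G c) ∧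
    (W.length = 1 → a ∉ avoidSet G c ∨ b ∉ avoidSet G c)

/-- `S_{C,e}` for `e = ab`: all internal vertices of `C`-avoiding `(a,b)`-paths. -/
def Sset {V : Type u} (G : SimpleGraph V) {v : V} (c : G.Walk v v) (a b : V) : Set V :=
  {w | ∃ W : G.Walk a b, IsCAvoidingPath G c W ∧ w ∈ W.support ∧ w ≠ a ∧ w ≠ b}

/-- `T_{C,e}` for `e = ab`: all vertices `w` such that `a w b` is a `C`-avoiding path. -/
def Tset {V : Type u} (G : SimpleGraph V) {v : V} (c : G.Walk v v) (a b : V) : Set V :=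
  {w | ∃ (h₁ : G.Adj a w) (h₂ : G.Adj w b),
      IsCAvoidingPath G c (Walk.cons h₁ (Walk.cons h₂ Walk.nil))}

/-- `X_{C,e} = X_C ∪ {a, b}` for `e = ab`. -/
def Xce {V : Type u} (G : SimpleGraph V) {v : V} (c : G.Walk v v) (a b : V) : Set V :=
  holeNbrs G c ∪ {a, b}

/-- The number of connected components of a graph. -/
noncomputable def numComponents {V : Type u} (G : SimpleGraph V) : ℕ :=
  Nat.card G.ConnectedComponent

/-- `X` is a vertex cut of `G` if `G − X` has more connected components than `G`. -/
def IsVertexCut {V : Type u} (G : SimpleGraph V) (X : Set V) : Prop :=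
  numComponents G < numComponents (G.induce Xᶜ)

/-- A clique cut: a vertex cut which is a clique. -/
def IsCliqueCut {V : Type u} (G : SimpleGraph V) (X : Set V) : Prop :=
  G.IsClique X ∧ IsVertexCut G X

/-- `U` is a union of connected components of `G − X`. -/
def IsComponentUnion {V : Type u} (G : SimpleGraph V) (X U : Set V) : Prop :=
  U ⊆ Xᶜ ∧ ∀ a b : ↥(Xᶜ), (G.induce Xᶜ).Reachable a b → ((a : V) ∈ U ↔ (b : V) ∈ U)

/-- A chordal cut: a clique cut `X` such that there is a (nonempty) union `U` of
connected components of `G − X` with `G[U ∪ X]` chordal. -/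
def IsChordalCut {V : Type u} (G : SimpleGraph V) (X : Set V) : Prop :=
  IsCliqueCut G X ∧
    ∃ U : Set V, U.Nonempty ∧ IsComponentUnion G X U ∧ Chordal (G.induce (U ∪ X))

/-- `x` lies in `Q_{C,e}`, the connected component of `G − X_{C,e}` containing
`V(C) \ {a, b}` (for `e = ab`). -/
def InQ {V : Type u} (G : SimpleGraph V) {v : V} (c : G.Walk v v) (a b : V) (x : V) : Prop :=
  ∃ (hx : x ∈ (Xce G c a b)ᶜ) (y : V) (hy : y ∈ (Xce G c a b)ᶜ),
    y ∈ c.support ∧ y ≠ a ∧ y ≠ b ∧ (G.induce (Xce G c a b)ᶜ).Reachable ⟨x, hx⟩ ⟨y, hy⟩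

/-- The vertex set of `U_{C,e}`: the union of the connected components of
`G − X_{C,e}` other than `Q_{C,e}` containing a vertex of `T_{C,e}`. -/
def Uset {V : Type u} (G : SimpleGraph V) {v : V} (c : G.Walk v v) (a b : V) : Set V :=
  {x | ∃ hx : x ∈ (Xce G c a b)ᶜ, ¬ InQ G c a b x ∧
      ∃ (t : V) (ht : t ∈ (Xce G c a b)ᶜ), t ∈ Tset G c a b ∧ ¬ InQ G c a b t ∧
        (G.induce (Xce G c a b)ᶜ).Reachable ⟨x, hx⟩ ⟨t, ht⟩}

/-- `G` has the chordal property: there are a hole `C` and an edge `e` of `C` such that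
`G[V(U_{C,e}) ∪ X_{C,e}]` is chordal. -/
def HasChordalProperty {V : Type u} (G : SimpleGraph V) : Prop :=
  ∃ (v : V) (c : G.Walk v v) (a b : V), IsHole G c ∧ s(a, b) ∈ c.edges ∧
    Chordal (G.induce (Uset G c a b ∪ Xce G c a b))

/-- `h(G)`: the number of holes of `G`, counted by their edge sets. -/
noncomputable def holeCount {V : Type u} (G : SimpleGraph V) : ℕ :=
  Nat.card {s : Set (Sym2 V) // ∃ (v : V) (c : G.Walk v v), IsHole G c ∧ s = {e | e ∈ c.edges}}

/-- `G` together with `k` added isolated vertices. -/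
def addIsolated {V : Type u} (G : SimpleGraph V) (k : ℕ) : SimpleGraph (V ⊕ Fin k) where
  Adj a b := ∃ x y, G.Adj x y ∧ a = Sum.inl x ∧ b = Sum.inl y
  symm := by
    refine ⟨?_⟩
    rintro a b ⟨x, y, h, rfl, rfl⟩
    exact ⟨y, x, h.symm, rfl, rfl⟩
  loopless := by
    refine ⟨?_⟩
    rintro a ⟨x, y, h, rfl, hy⟩
    obtain rfl := Sum.inl.inj hy
    exact G.loopless.irrefl x h

/-- A digraph (given by its arc relation) is acyclic: it has no directed closed walk. -/
def IsAcyclicDigraph {α : Type u} (r : α → α → Prop) : Prop :=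
  ∀ x, ¬ Relation.TransGen r x x

/-- `H` is the competition graph of some acyclic digraph: distinct vertices are adjacent
iff they have a common out-neighbour (prey). -/
def IsCompetitionGraphOfAcyclicDigraph {α : Type u} (H : SimpleGraph α) : Prop :=
  ∃ r : α → α → Prop, IsAcyclicDigraph r ∧
    ∀ a b : α, H.Adj a b ↔ a ≠ b ∧ ∃ x, r a x ∧ r b x

/-- The competition number `k(G)`: the least `k` such that `G` together with `k` isolated
vertices is the competition graph of an acyclic digraph. -/
noncomputable def compNumber {V : Type u} (G : SimpleGraph V) : ℕ :=
  sInf {k | IsCompetitionGraphOfAcyclicDigraph (addIsolated G k)}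

open Walk

section AuxForStatement4

variable {V : Type u} {G : SimpleGraph V} [DecidableEq V]

variable {V : Type u} {G : SimpleGraph V} [DecidableEq V]

lemma head_nbr_unique {x u z₁ z₂ : V} {p : G.Walk x u} (hp : p.IsPath)
    (h1 : s(x,z₁) ∈ p.edges) (h2 : s(x,z₂) ∈ p.edges) : z₁ = z₂ := by
  cases p with
  | nil => simp at h1
  | cons h q =>
    rename_i y
    rw [Walk.edges_cons, List.mem_cons] at h1 h2
    rw [Walk.cons_isPath_iff] at hp
    have k : ∀ z, s(x,z) = s(x,y) ∨ s(x,z) ∈ q.edges → z = y := by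
      rintro z (hz | hz)
      · exact (Sym2.congr_right).1 hz
      · exact absurd (q.fst_mem_support_of_mem_edges hz) hp.2
    rw [k z₁ h1, k z₂ h2]

lemma mem_support_of_mem_edges'' {u v x : V} {e : Sym2 V} {p : G.Walk u v}
    (he : e ∈ p.edges) (hx : x ∈ e) : x ∈ p.support := by
  induction e with
  | _ y z =>
    rcases Sym2.mem_iff.1 hx with rfl | rfl
    · exact p.fst_mem_support_of_mem_edges he
    · exact p.snd_mem_support_of_mem_edges he

lemma end_mem_tail_support' {u w : V} {p : G.Walk u w} (h : ¬ p.Nil) : w ∈ p.support.tail := by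
  cases p with
  | nil => simp at h
  | cons ha q => simpa using q.end_mem_support

lemma mem_tail_of_mem_support' {u : V} {p : G.Walk u u} (hnil : ¬ p.Nil) {x : V}
    (hx : x ∈ p.support) : x ∈ p.support.tail := by
  rw [p.support_eq_cons, List.mem_cons] at hx
  rcases hx with rfl | hx
  · exact end_mem_tail_support' hnil
  · exact hx

lemma not_nil_of_ne' {u v : V} {p : G.Walk u v} (h : u ≠ v) : ¬ p.Nil := by
  intro hn
  exact h (Walk.eq_of_length_eq_zero (Walk.nil_iff_length_eq.1 hn))

lemma exists_cons_of_ne {x y : V} (h : x ≠ y) (p : G.Walk x y) :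
    ∃ (w : V) (h2 : G.Adj x w) (r : G.Walk w y), p = Walk.cons h2 r := by
  cases p with
  | nil => exact absurd rfl h
  | cons h2 r => exact ⟨_, h2, r, rfl⟩

lemma mem_support_rotate {v x y : V} {c : G.Walk v v} (hc : c.IsCycle) (hx : x ∈ c.support) :
    y ∈ (c.rotate _ hx).support ↔ y ∈ c.support := by
  constructor <;> intro h
  · have := mem_tail_of_mem_support' (hc.rotate hx).not_nil h
    have := (c.support_rotate _ hx).mem_iff.1 this
    exact List.mem_of_mem_tail this
  · have := mem_tail_of_mem_support' hc.not_nil h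
    have := (c.support_rotate _ hx).mem_iff.2 this
    exact List.mem_of_mem_tail this

lemma length_rotate' {v x : V} (c : G.Walk v v) (hx : x ∈ c.support) :
    (c.rotate _ hx).length = c.length := by
  have h1 := congr_arg Walk.length (c.take_spec hx)
  rw [Walk.length_append] at h1
  show ((c.dropUntil x hx).append (c.takeUntil x hx)).length = c.length
  rw [Walk.length_append]
  omega

/-- each vertex of a cycle has exactly two neighbours along the cycle -/
lemma cycle_nbrs {v x : V} {c : G.Walk v v} (hc : c.IsCycle) (hx : x ∈ c.support) :
    ∃ p q : V, p ≠ q ∧ ∀ z, s(x,z) ∈ c.edges ↔ (z = p ∨ z = q) := by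
  have hmemE : ∀ e, e ∈ (c.rotate _ hx).edges ↔ e ∈ c.edges :=
    fun e => (c.rotate_edges _ hx).mem_iff
  have hc' := hc.rotate hx
  cases hrot : c.rotate _ hx with
  | nil => rw [hrot] at hc'; exact absurd rfl hc'.ne_nil
  | cons hadj q =>
    rename_i u
    rw [hrot] at hc' hmemE
    rw [Walk.cons_isCycle_iff] at hc'
    obtain ⟨hq, hxuq⟩ := hc'
    obtain ⟨w, h2, r, hqr⟩ := exists_cons_of_ne hadj.ne q.reverse
    have hqrev : q.reverse.IsPath := hq.reverse
    have hxw : s(x,w) ∈ q.edges := by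
      rw [← List.mem_reverse, ← Walk.edges_reverse, hqr]
      simp
    refine ⟨u, w, ?_, fun z => ?_⟩
    · rintro rfl
      exact hxuq hxw
    constructor
    · intro hz
      rw [← hmemE, Walk.edges_cons, List.mem_cons] at hz
      rcases hz with hz | hz
      · exact Or.inl (Sym2.congr_right.1 hz)
      · refine Or.inr ?_
        have hz' : s(x,z) ∈ q.reverse.edges := by rw [Walk.edges_reverse, List.mem_reverse]; exact hz
        have hw' : s(x,w) ∈ q.reverse.edges := by rw [Walk.edges_reverse, List.mem_reverse]; exact hxw
        exact head_nbr_unique hqrev hz' hw'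
    · rintro (rfl | rfl)
      · rw [← hmemE]; simp
      · rw [← hmemE, Walk.edges_cons, List.mem_cons]; exact Or.inr hxw

lemma support_closure {s t : V} {p : G.Walk s t} (S : Set V) (hs : s ∈ S)
    (h : ∀ x ∈ S, ∀ y, s(x,y) ∈ p.edges → y ∈ S) : ∀ z ∈ p.support, z ∈ S := by
  induction p with
  | nil => intro z hz; rw [Walk.support_nil, List.mem_singleton] at hz; exact hz ▸ hs
  | cons ha q ih =>
    intro z hz
    rename_i a b c'
    have hb : b ∈ S := h a hs b (by simp)
    rw [Walk.support_cons, List.mem_cons] at hz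
    rcases hz with rfl | hz
    · exact hs
    · exact ih hb (fun x hx y hy => h x hx y (by rw [Walk.edges_cons]; exact List.mem_cons_of_mem _ hy)) z hz

lemma no_triangle {v : V} {c : G.Walk v v} (hc : c.IsCycle) (hlen : 4 ≤ c.length)
    {x y z : V} (hxy : x ≠ y) (hyz : y ≠ z) (hxz : x ≠ z)
    (e1 : s(x,y) ∈ c.edges) (e2 : s(y,z) ∈ c.edges) (e3 : s(x,z) ∈ c.edges) : False := by
  have hx : x ∈ c.support := c.fst_mem_support_of_mem_edges e1
  have hy : y ∈ c.support := c.snd_mem_support_of_mem_edges e1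
  have hz : z ∈ c.support := c.snd_mem_support_of_mem_edges e2
  have pairlem : ∀ (w p q : V), p ≠ q → s(w,p) ∈ c.edges → s(w,q) ∈ c.edges →
      w ∈ c.support → ∀ t, s(w,t) ∈ c.edges → t = p ∨ t = q := by
    intro w p q hpq hp hq hw t ht
    obtain ⟨α, β, hαβ, hiff⟩ := cycle_nbrs hc hw
    have h1 := (hiff p).1 hp
    have h2 := (hiff q).1 hq
    have h3 := (hiff t).1 ht
    rcases h1 with rfl | rfl <;> rcases h2 with rfl | rfl <;> rcases h3 with rfl | rfl <;> tauto
  set S : Set V := {x, y, z} with hS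
  have hclos : ∀ w ∈ S, ∀ t, s(w,t) ∈ (c.rotate _ hx).edges → t ∈ S := by
    intro w hw t ht
    rw [(c.rotate_edges _ hx).mem_iff] at ht
    simp only [hS, Set.mem_insert_iff, Set.mem_singleton_iff] at hw ⊢
    rcases hw with h | h | h
    · rw [h] at ht
      rcases pairlem x y z hyz e1 e3 hx t ht with rfl | rfl <;> tauto
    · rw [h] at ht
      have e1' : s(y,x) ∈ c.edges := Sym2.eq_swap ▸ e1
      rcases pairlem y x z hxz e1' e2 hy t ht with rfl | rfl <;> tauto
    · rw [h] at ht
      have e2' : s(z,y) ∈ c.edges := Sym2.eq_swap ▸ e2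
      have e3' : s(z,x) ∈ c.edges := Sym2.eq_swap ▸ e3
      rcases pairlem z x y hxy e3' e2' hz t ht with rfl | rfl <;> tauto
  have hsub : ∀ w ∈ (c.rotate _ hx).support, w ∈ S :=
    support_closure S (Or.inl rfl) hclos
  have hnodup : c.support.tail.Nodup := hc.support_nodup
  have hlen' : c.support.tail.length = c.length := by
    have := c.length_support
    simp only [List.length_tail, this]
    omega
  have hsub' : c.support.tail.toFinset ⊆ ({x, y, z} : Finset V) := by
    intro w hw
    rw [List.mem_toFinset] at hw
    have hw1 : w ∈ c.support := List.mem_of_mem_tail hw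
    have hw2 := hsub w ((mem_support_rotate hc hx).2 hw1)
    rcases hw2 with rfl | rfl | rfl <;> simp
  have hcard : c.support.tail.toFinset.card = c.length := by
    rw [List.toFinset_card_of_nodup hnodup, hlen']
  have hle := Finset.card_le_card hsub'
  have h3 : ({x, y, z} : Finset V).card ≤ 3 := by
    apply (Finset.card_insert_le _ _).trans
    have := Finset.card_insert_le y ({z} : Finset V)
    simp only [Finset.card_singleton] at this
    omega
  omega

lemma ex_nonadj {v x : V} {c : G.Walk v v} (hc : c.IsCycle) (hx : x ∈ c.support)
    (hlen : 4 ≤ c.length) :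
    ∃ z, z ∈ c.support ∧ z ≠ x ∧ s(x,z) ∉ c.edges := by
  obtain ⟨p, q, hpq, hiff⟩ := cycle_nbrs hc hx
  have hnodup : c.support.tail.Nodup := hc.support_nodup
  have hlen' : c.support.tail.length = c.length := by
    have := c.length_support
    simp only [List.length_tail, this]; omega
  have hcard : c.support.tail.toFinset.card = c.length := by
    rw [List.toFinset_card_of_nodup hnodup, hlen']
  have h3 : ({x, p, q} : Finset V).card ≤ 3 := by
    apply (Finset.card_insert_le _ _).trans
    have := Finset.card_insert_le p ({q} : Finset V)
    simp only [Finset.card_singleton] at this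
    omega
  have hsd : 1 ≤ (c.support.tail.toFinset \ ({x, p, q} : Finset V)).card := by
    have := Finset.le_card_sdiff ({x, p, q} : Finset V) c.support.tail.toFinset
    omega
  have hpos : 0 < (c.support.tail.toFinset \ ({x, p, q} : Finset V)).card := by omega
  obtain ⟨z, hz⟩ := Finset.card_pos.1 hpos
  rw [Finset.mem_sdiff, List.mem_toFinset] at hz
  obtain ⟨hz1, hz2⟩ := hz
  simp only [Finset.mem_insert, Finset.mem_singleton, not_or] at hz2
  refine ⟨z, List.mem_of_mem_tail hz1, hz2.1, fun hmem => ?_⟩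
  rcases (hiff z).1 hmem with rfl | rfl
  · exact hz2.2.1 rfl
  · exact hz2.2.2 rfl

lemma ex_nonadj2 {v x : V} {c : G.Walk v v} (hc : c.IsCycle) (hx : x ∈ c.support)
    (hlen : 5 ≤ c.length) :
    ∃ z₁ z₂, z₁ ≠ z₂ ∧ z₁ ∈ c.support ∧ z₂ ∈ c.support ∧ z₁ ≠ x ∧ z₂ ≠ x ∧
      s(x,z₁) ∉ c.edges ∧ s(x,z₂) ∉ c.edges := by
  obtain ⟨p, q, hpq, hiff⟩ := cycle_nbrs hc hx
  have hnodup : c.support.tail.Nodup := hc.support_nodup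
  have hlen' : c.support.tail.length = c.length := by
    have := c.length_support
    simp only [List.length_tail, this]; omega
  have hcard : c.support.tail.toFinset.card = c.length := by
    rw [List.toFinset_card_of_nodup hnodup, hlen']
  have h3 : ({x, p, q} : Finset V).card ≤ 3 := by
    apply (Finset.card_insert_le _ _).trans
    have := Finset.card_insert_le p ({q} : Finset V)
    simp only [Finset.card_singleton] at this
    omega
  have hsd : 2 ≤ (c.support.tail.toFinset \ ({x, p, q} : Finset V)).card := by
    have := Finset.le_card_sdiff ({x, p, q} : Finset V) c.support.tail.toFinset
    omega
  have hpos : 1 < (c.support.tail.toFinset \ ({x, p, q} : Finset V)).card := by omega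
  obtain ⟨z₁, hz1m, z₂, hz2m, hne⟩ := Finset.one_lt_card.1 hpos
  rw [Finset.mem_sdiff, List.mem_toFinset] at hz1m hz2m
  simp only [Finset.mem_insert, Finset.mem_singleton, not_or] at hz1m hz2m
  refine ⟨z₁, z₂, hne, List.mem_of_mem_tail hz1m.1, List.mem_of_mem_tail hz2m.1,
    hz1m.2.1, hz2m.2.1, fun hmem => ?_, fun hmem => ?_⟩
  · rcases (hiff z₁).1 hmem with rfl | rfl
    · exact hz1m.2.2.1 rfl
    · exact hz1m.2.2.2 rfl
  · rcases (hiff z₂).1 hmem with rfl | rfl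
    · exact hz2m.2.2.1 rfl
    · exact hz2m.2.2.2 rfl

omit [DecidableEq V] in
lemma mapLe_support' {G' : SimpleGraph V} (h : G ≤ G') {u w : V} (p : G.Walk u w) :
    (p.mapLe h).support = p.support := by
  have hid : ⇑(Hom.ofLE h) = id := rfl
  simp only [Walk.mapLe, Walk.support_map, hid, List.map_id]

omit [DecidableEq V] in
lemma mapLe_edges' {G' : SimpleGraph V} (h : G ≤ G') {u w : V} (p : G.Walk u w) :
    (p.mapLe h).edges = p.edges := by
  have hid : ⇑(Hom.ofLE h) = id := rfl
  simp only [Walk.mapLe, Walk.edges_map, hid, Sym2.map_id, List.map_id]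

omit [DecidableEq V] in
lemma mapLe_length' {G' : SimpleGraph V} (h : G ≤ G') {u w : V} (p : G.Walk u w) :
    (p.mapLe h).length = p.length := by
  simp [Walk.mapLe, Walk.length_map]

omit [DecidableEq V] in
lemma adj_of_length_one {u w : V} {p : G.Walk u w} (h : p.length = 1) : G.Adj u w := by
  cases p with
  | nil => simp at h
  | cons ha q =>
    simp only [Walk.length_cons, Nat.add_eq_right] at h
    have := Walk.eq_of_length_eq_zero h
    exact this ▸ ha

lemma exists_edge_of_cycle_support {v x : V} {c : G.Walk v v} (hc : c.IsCycle)
    (hx : x ∈ c.support) : ∃ e ∈ c.edges, x ∈ e := by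
  obtain ⟨p, q, hpq, hiff⟩ := cycle_nbrs hc hx
  exact ⟨s(x,p), (hiff p).2 (Or.inl rfl), Sym2.mem_mk_left _ _⟩

lemma cycle_split {a : V} {c : G.Walk a a} (hc : c.IsCycle) {b : V} (hb : b ∈ c.support)
    (hba : b ≠ a) :
    ∃ (P : G.Walk a b) (Q : G.Walk b a), P.append Q = c ∧ P.IsPath ∧ Q.IsPath ∧
      (∀ x, x ∈ P.support → x ∈ Q.support → x = a ∨ x = b) := by
  refine ⟨c.takeUntil b hb, c.dropUntil b hb, c.take_spec hb, ?_⟩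
  set P := c.takeUntil b hb with hP
  set Q := c.dropUntil b hb with hQ
  have hsupp : c.support = P.support ++ Q.support.tail := by
    conv_lhs => rw [← c.take_spec hb]
    rw [Walk.support_append]
  have hPc : P.support = a :: P.support.tail := P.support_eq_cons
  have htails : c.support.tail = P.support.tail ++ Q.support.tail := by
    have := hsupp
    rw [hPc, c.support_eq_cons] at this
    exact congrArg List.tail this
  have hnodup : (P.support.tail ++ Q.support.tail).Nodup := htails ▸ hc.support_nodup
  rw [List.nodup_append] at hnodup
  obtain ⟨hnP, hnQ, hdisj⟩ := hnodup
  have hPnil : ¬ P.Nil := not_nil_of_ne' (Ne.symm hba)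
  have hQnil : ¬ Q.Nil := not_nil_of_ne' hba
  have haQ : a ∈ Q.support.tail := end_mem_tail_support' hQnil
  have hbP : b ∈ P.support.tail := end_mem_tail_support' hPnil
  have hPpath : P.IsPath := by
    rw [Walk.isPath_def, hPc, List.nodup_cons]
    exact ⟨fun hmem => hdisj _ hmem _ haQ rfl, hnP⟩
  have hQpath : Q.IsPath := by
    rw [Walk.isPath_def, Q.support_eq_cons, List.nodup_cons]
    exact ⟨fun hmem => hdisj _ hbP _ hmem rfl, hnQ⟩
  refine ⟨hPpath, hQpath, fun x hxP hxQ => ?_⟩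
  rw [hPc, List.mem_cons] at hxP
  rw [Q.support_eq_cons, List.mem_cons] at hxQ
  rcases hxP with rfl | hxP
  · exact Or.inl rfl
  rcases hxQ with rfl | hxQ
  · exact Or.inr rfl
  · exact (hdisj _ hxP _ hxQ rfl).elim

omit [DecidableEq V] in
/-- build a hole from an induced 4-cycle -/
lemma hole4 {p q r s : V} (hpq : G.Adj p q) (hqr : G.Adj q r) (hrs : G.Adj r s)
    (hsp : G.Adj s p) (hpr : ¬ G.Adj p r) (hqs : ¬ G.Adj q s) (hpr' : p ≠ r) (hqs' : q ≠ s) :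
    IsHole G (Walk.cons hpq (Walk.cons hqr (Walk.cons hrs (Walk.cons hsp Walk.nil)))) := by
  have hp_q := hpq.ne
  have hq_r := hqr.ne
  have hr_s := hrs.ne
  have hs_p := hsp.ne
  have hq_p := hpq.ne'
  have hr_q := hqr.ne'
  have hs_r := hrs.ne'
  have hp_s := hsp.ne'
  have hr_p := Ne.symm hpr'
  have hs_q := Ne.symm hqs'
  refine ⟨?_, by simp, ?_⟩
  · rw [Walk.isCycle_def]
    refine ⟨?_, by simp, ?_⟩
    · rw [Walk.isTrail_def]
      simp only [Walk.edges_cons, Walk.edges_nil, List.nodup_cons, List.mem_cons,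
        List.mem_singleton, List.not_mem_nil, not_false_iff, and_true, not_or, List.nodup_nil]
      simp only [Sym2.eq_iff]
      tauto
    · simp only [Walk.support_cons, Walk.support_nil, List.tail_cons]
      simp only [List.nodup_cons, List.mem_cons, List.mem_singleton, List.not_mem_nil,
        not_or, List.nodup_nil]
      tauto
  · intro x hx y hy hadj
    simp only [Walk.support_cons, Walk.support_nil, List.mem_cons, List.mem_singleton,
      List.not_mem_nil, or_false] at hx hy
    simp only [Walk.edges_cons, Walk.edges_nil, List.mem_cons, List.not_mem_nil, or_false]
    have hsymm : ∀ u w : V, s(u,w) = s(w,u) := fun u w => Sym2.eq_swap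
    rcases hx with rfl | rfl | rfl | rfl | rfl <;> rcases hy with rfl | rfl | rfl | rfl | rfl <;>
      first
        | exact absurd hadj (G.loopless.irrefl _)
        | exact absurd hadj hpr
        | exact absurd hadj hqs
        | exact absurd hadj (fun h => hpr h.symm)
        | exact absurd hadj (fun h => hqs h.symm)
        | tauto

omit [DecidableEq V] in
/-- produce a contradiction with `K222Free` from six vertices in octahedron pattern -/
lemma k222_contra {x1 x2 y1 y2 z1 z2 : V} (hfree : K222Free G)
    (hx : ¬ G.Adj x1 x2) (hy : ¬ G.Adj y1 y2) (hz : ¬ G.Adj z1 z2)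
    (hx12 : x1 ≠ x2) (hy12 : y1 ≠ y2) (hz12 : z1 ≠ z2)
    (hxy11 : G.Adj x1 y1) (hxy12 : G.Adj x1 y2) (hxy21 : G.Adj x2 y1) (hxy22 : G.Adj x2 y2)
    (hxz11 : G.Adj x1 z1) (hxz12 : G.Adj x1 z2) (hxz21 : G.Adj x2 z1) (hxz22 : G.Adj x2 z2)
    (hyz11 : G.Adj y1 z1) (hyz12 : G.Adj y1 z2) (hyz21 : G.Adj y2 z1) (hyz22 : G.Adj y2 z2) :
    False := by
  apply hfree
  refine ⟨fun p => ![![x1,x2],![y1,y2],![z1,z2]] p.1 p.2, ?_, ?_⟩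
  · have := hxy11.ne; have := hxy12.ne; have := hxy21.ne; have := hxy22.ne
    have := hxz11.ne; have := hxz12.ne; have := hxz21.ne; have := hxz22.ne
    have := hyz11.ne; have := hyz12.ne; have := hyz21.ne; have := hyz22.ne
    rintro ⟨i, j⟩ ⟨i', j'⟩ h
    fin_cases i <;> fin_cases i' <;> fin_cases j <;> fin_cases j' <;>
      simp_all <;> exact absurd h.symm (by assumption)
  · have hx' : ¬ G.Adj x2 x1 := fun h => hx h.symm
    have hy' : ¬ G.Adj y2 y1 := fun h => hy h.symm
    have hz' : ¬ G.Adj z2 z1 := fun h => hz h.symm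
    rintro ⟨i, j⟩ ⟨i', j'⟩
    fin_cases i <;> fin_cases i' <;> fin_cases j <;> fin_cases j' <;>
      simp_all [K222, G.loopless, hxy11.symm, hxy12.symm, hxy21.symm, hxy22.symm,
        hxz11.symm, hxz12.symm, hxz21.symm, hxz22.symm,
        hyz11.symm, hyz12.symm, hyz21.symm, hyz22.symm] <;> decide

lemma path_closed_nil {z : V} {p : G.Walk z z} (hp : p.IsPath) : p.Nil := by
  by_contra h
  have h1 := end_mem_tail_support' h
  have h2 := hp.support_nodup
  rw [p.support_eq_cons, List.nodup_cons] at h2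
  exact h2.1 h1

/-- if `Sset` is empty, every path from `a` to `b` of length ≥ 2 has an internal vertex
in the avoid set -/
lemma internal_avoid {va a b : V} {c : G.Walk va va} (hS : Sset G c a b = ∅) (hab : a ≠ b)
    (W : G.Walk a b) (hW : W.IsPath) (hlen : 2 ≤ W.length) :
    ∃ x ∈ W.support, x ≠ a ∧ x ≠ b ∧ x ∈ avoidSet G c := by
  by_contra h
  push_neg at h
  have hCA : IsCAvoidingPath G c W := by
    refine ⟨hW, fun x hx hxa hxb => h x hx hxa hxb, fun h1 => absurd h1 (by omega)⟩
  obtain ⟨m, h2, r, hWr⟩ := exists_cons_of_ne hab W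
  have hma : m ≠ a := by
    intro h'
    have := hW
    rw [hWr, Walk.cons_isPath_iff] at this
    exact this.2 (h' ▸ r.start_mem_support)
  have hmb : m ≠ b := by
    rintro rfl
    have hrp : r.IsPath := by
      have := hW; rw [hWr, Walk.cons_isPath_iff] at this; exact this.1
    have := path_closed_nil hrp
    rw [Walk.nil_iff_length_eq] at this
    rw [hWr] at hlen
    simp [Walk.length_cons, this] at hlen
  have hmem : m ∈ W.support := by
    rw [hWr, Walk.support_cons]
    exact List.mem_cons_of_mem _ r.start_mem_support
  have : m ∈ Sset G c a b := ⟨W, hCA, hmem, hma, hmb⟩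
  rw [hS] at this
  exact this

/-- common neighbours of the two ends of a hole edge with empty `Sset` are hole dominators -/
lemma apex_of_T {va a b : V} {c : G.Walk va va} (hc : IsHole G c) (he : s(a,b) ∈ c.edges)
    (hS : Sset G c a b = ∅) {m : V} (ham : G.Adj a m) (hmb : G.Adj m b)
    (hmbne : m ≠ b) : m ∈ holeNbrs G c ∧ m ∉ c.support := by
  have hab : G.Adj a b := c.adj_of_mem_edges he
  have hma : m ≠ a := ham.ne'
  have havoid : m ∈ avoidSet G c := by
    by_contra hnm
    have hCA : IsCAvoidingPath G c (Walk.cons ham (Walk.cons hmb Walk.nil)) := by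
      refine ⟨?_, ?_, ?_⟩
      · rw [Walk.isPath_def]
        simp only [Walk.support_cons, Walk.support_nil]
        simp [ham.ne, hab.ne, hmbne]
      · intro x hx hxa hxb
        simp only [Walk.support_cons, Walk.support_nil, List.mem_cons,
          List.mem_singleton, List.not_mem_nil, or_false] at hx
        rcases hx with rfl | rfl | rfl
        · exact absurd rfl hxa
        · exact hnm
        · exact absurd rfl hxb
      · intro h1; simp at h1
    have : m ∈ Sset G c a b :=
      ⟨Walk.cons ham (Walk.cons hmb Walk.nil), hCA, by simp, hma, hmbne⟩
    rw [hS] at this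
    exact this
  have ha : a ∈ c.support := c.fst_mem_support_of_mem_edges he
  have hb : b ∈ c.support := c.snd_mem_support_of_mem_edges he
  rcases havoid with hmem | hnbr
  · exfalso
    have e1 : s(a,m) ∈ c.edges := hc.2.2 a ha m hmem ham
    have e2 : s(m,b) ∈ c.edges := hc.2.2 m hmem b hb hmb
    exact no_triangle hc.1 hc.2.1 ham.ne hmbne (hab.ne) e1 e2 he
  · exact ⟨hnbr, fun hmem => G.loopless.irrefl m (hnbr m hmem)⟩

/-- two nonadjacent dominating vertices of a hole are impossible -/
lemma two_apex_contra (hfree : K222Free G) (hhed : HoleEdgeDisjoint G) {va : V}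
    {c : G.Walk va va} (hc : IsHole G c) {x y : V}
    (hx : x ∈ holeNbrs G c) (hy : y ∈ holeNbrs G c)
    (hxs : x ∉ c.support) (hys : y ∉ c.support) (hxy : x ≠ y) (hnadj : ¬ G.Adj x y) :
    False := by
  obtain ⟨hcyc, hlen, hind⟩ := hc
  have hv : va ∈ c.support := c.start_mem_support
  have hax : ∀ z ∈ c.support, G.Adj x z := hx
  have hay : ∀ z ∈ c.support, G.Adj y z := hy
  rcases Nat.lt_or_ge c.length 5 with h4 | h5
  · -- length 4 : K222
    have hl4 : c.length = 4 := by omega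
    obtain ⟨z, hzs, hzv, hznadj⟩ := ex_nonadj hcyc hv hlen
    obtain ⟨p, q, hpq, hiffv⟩ := cycle_nbrs hcyc hv
    have hvp : s(va,p) ∈ c.edges := (hiffv p).2 (Or.inl rfl)
    have hvq : s(va,q) ∈ c.edges := (hiffv q).2 (Or.inr rfl)
    have hps : p ∈ c.support := c.snd_mem_support_of_mem_edges hvp
    have hqs : q ∈ c.support := c.snd_mem_support_of_mem_edges hvq
    have hadjvp : G.Adj va p := c.adj_of_mem_edges hvp
    have hadjvq : G.Adj va q := c.adj_of_mem_edges hvq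
    have hzp : z ≠ p := fun h => hznadj (h ▸ hvp)
    have hzq : z ≠ q := fun h => hznadj (h ▸ hvq)
    -- the support has exactly the four vertices va p q z
    have htl : c.support.tail.toFinset = ({va, p, q, z} : Finset V) := by
      have hnodup : c.support.tail.Nodup := hcyc.support_nodup
      have hlen' : c.support.tail.length = c.length := by
        have := c.length_support
        simp only [List.length_tail, this]; omega
      have hsub : ({va, p, q, z} : Finset V) ⊆ c.support.tail.toFinset := by
        intro t ht
        rw [List.mem_toFinset]
        simp only [Finset.mem_insert, Finset.mem_singleton] at ht
        rcases ht with rfl | rfl | rfl | rfl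
        · exact mem_tail_of_mem_support' hcyc.not_nil hv
        · exact mem_tail_of_mem_support' hcyc.not_nil hps
        · exact mem_tail_of_mem_support' hcyc.not_nil hqs
        · exact mem_tail_of_mem_support' hcyc.not_nil hzs
      have hcard4 : ({va, p, q, z} : Finset V).card = 4 := by
        rw [Finset.card_insert_of_notMem (by simp [hadjvp.ne, hadjvq.ne, Ne.symm hzv]),
          Finset.card_insert_of_notMem (by simp [hpq, Ne.symm hzp]),
          Finset.card_insert_of_notMem (by simp [Ne.symm hzq]), Finset.card_singleton]
      have hcardT : c.support.tail.toFinset.card = 4 := by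
        rw [List.toFinset_card_of_nodup hnodup, hlen', hl4]
      exact (Finset.eq_of_subset_of_card_le hsub (by omega)).symm
    have hsupp4 : ∀ t ∈ c.support, t = va ∨ t = p ∨ t = q ∨ t = z := by
      intro t ht
      have : t ∈ c.support.tail := mem_tail_of_mem_support' hcyc.not_nil ht
      have : t ∈ c.support.tail.toFinset := List.mem_toFinset.2 this
      rw [htl] at this
      simpa using this
    -- z is adjacent to p and q along the cycle
    obtain ⟨α, β, hαβ, hiffz⟩ := cycle_nbrs hcyc hzs
    have hzedge : ∀ t, s(z,t) ∈ c.edges → t = p ∨ t = q := by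
      intro t ht
      have hts : t ∈ c.support := c.snd_mem_support_of_mem_edges ht
      have htz : t ≠ z := (c.adj_of_mem_edges ht).ne'
      have htv : t ≠ va := by
        rintro rfl
        exact hznadj (Sym2.eq_swap ▸ ht)
      rcases hsupp4 t hts with rfl | h | h | rfl
      · exact absurd rfl htv
      · exact Or.inl h
      · exact Or.inr h
      · exact absurd rfl htz
    have hzα : s(z,α) ∈ c.edges := (hiffz α).2 (Or.inl rfl)
    have hzβ : s(z,β) ∈ c.edges := (hiffz β).2 (Or.inr rfl)
    have hzpq : s(z,p) ∈ c.edges ∧ s(z,q) ∈ c.edges := by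
      rcases hzedge α hzα with rfl | rfl <;> rcases hzedge β hzβ with rfl | rfl
      · exact absurd rfl hαβ
      · exact ⟨hzα, hzβ⟩
      · exact ⟨hzβ, hzα⟩
      · exact absurd rfl hαβ
    have hadjzp : G.Adj z p := c.adj_of_mem_edges hzpq.1
    have hadjzq : G.Adj z q := c.adj_of_mem_edges hzpq.2
    -- p and q are not adjacent
    have hpqnadj : ¬ G.Adj p q := by
      intro hpq'
      have hepq : s(p,q) ∈ c.edges := hind p hps q hqs hpq'
      obtain ⟨γ, δ, hγδ, hiffp⟩ := cycle_nbrs hcyc hps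
      have h1 := (hiffp va).1 (Sym2.eq_swap ▸ hvp)
      have h2 := (hiffp z).1 (Sym2.eq_swap ▸ hzpq.1)
      have h3 := (hiffp q).1 hepq
      have hvz : va ≠ z := Ne.symm hzv
      have hvq' : va ≠ q := hadjvq.ne
      have hzq' : z ≠ q := hzq
      rcases h1 with rfl | rfl <;> rcases h2 with h2 | h2 <;> rcases h3 with h3 | h3 <;>
        simp_all
    have hvznadj : ¬ G.Adj va z := fun h => hznadj (hind va hv z hzs h)
    exact k222_contra hfree hnadj hvznadj hpqnadj hxy (Ne.symm hzv) hpq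
      (hax va hv) (hax z hzs) (hay va hv) (hay z hzs)
      (hax p hps) (hax q hqs) (hay p hps) (hay q hqs)
      hadjvp hadjvq hadjzp hadjzq
  · -- length ≥ 5 : two holes sharing one edge
    obtain ⟨z₁, z₂, hz12, hz1s, hz2s, hz1v, hz2v, hne1, hne2⟩ := ex_nonadj2 hcyc hv h5
    have hnadj1 : ¬ G.Adj va z₁ := fun h => hne1 (hind va hv z₁ hz1s h)
    have hnadj2 : ¬ G.Adj va z₂ := fun h => hne2 (hind va hv z₂ hz2s h)
    have hxv : G.Adj x va := hax va hv
    have hvy : G.Adj va y := (hay va hv).symm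
    have hyz1 : G.Adj y z₁ := hay z₁ hz1s
    have hyz2 : G.Adj y z₂ := hay z₂ hz2s
    have hz1x : G.Adj z₁ x := (hax z₁ hz1s).symm
    have hz2x : G.Adj z₂ x := (hax z₂ hz2s).symm
    have hxz1s : x ≠ z₁ := fun h => hxs (h ▸ hz1s)
    have hxz2s : x ≠ z₂ := fun h => hxs (h ▸ hz2s)
    have hyz1s : y ≠ z₁ := fun h => hys (h ▸ hz1s)
    have hyz2s : y ≠ z₂ := fun h => hys (h ▸ hz2s)
    have hyva : y ≠ va := fun h => hys (h ▸ hv)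
    have hxva : x ≠ va := fun h => hxs (h ▸ hv)
    have hH1 := hole4 hxv hvy hyz1 hz1x hnadj hnadj1 hxy (Ne.symm hz1v)
    have hH2 := hole4 hxv hvy hyz2 hz2x hnadj hnadj2 hxy (Ne.symm hz2v)
    rcases hhed x x _ _ hH1 hH2 with hEq | hDisj
    · have : s(y,z₁) ∈ (Walk.cons hxv (Walk.cons hvy (Walk.cons hyz2 (Walk.cons hz2x
          Walk.nil)))).edges := by
        have : s(y,z₁) ∈ {e | e ∈ (Walk.cons hxv (Walk.cons hvy (Walk.cons hyz1 (Walk.cons hz1x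
            Walk.nil)))).edges} := by simp
        rw [hEq] at this
        exact this
      simp only [Walk.edges_cons, Walk.edges_nil, List.mem_cons, List.not_mem_nil,
        or_false, Sym2.eq_iff] at this
      rcases this with ⟨h1, h2⟩ | ⟨h1, h2⟩ | ⟨h1, h2⟩ | ⟨h1, h2⟩ | ⟨h1, h2⟩ | ⟨h1, h2⟩ |
        ⟨h1, h2⟩ | ⟨h1, h2⟩ <;> simp_all
    · exact hDisj s(x,va) (by simp) (by simp)

lemma list_three {l : List V} (h : l.Nodup) (h3 : 3 ≤ l.length) :
    ∃ y₁ y₂ y₃, y₁ ∈ l ∧ y₂ ∈ l ∧ y₃ ∈ l ∧ y₁ ≠ y₂ ∧ y₁ ≠ y₃ ∧ y₂ ≠ y₃ := by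
  match l, h, h3 with
  | y₁ :: y₂ :: y₃ :: t, h, _ =>
    simp only [List.nodup_cons, List.mem_cons, not_or] at h
    exact ⟨y₁, y₂, y₃, by simp, by simp, by simp, h.1.1, h.1.2.1, h.2.1.1⟩

omit [DecidableEq V] in
/-- an arc replacing the edge `ab` of the hole `c`, when long enough and induced,
must close up (with `ab`) into a hole whose edge set coincides with that of `c`. -/
lemma holeArc (hhed : HoleEdgeDisjoint G) {va : V} {c : G.Walk va va} (hc : IsHole G c)
    {a b : V} (he : s(a,b) ∈ c.edges)
    {G' : SimpleGraph V} (hle : G' ≤ G) (hG'ab : s(a,b) ∉ G'.edgeSet)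
    (W : G'.Walk a b) (hWp : W.IsPath) (hWlen : 3 ≤ W.length)
    (hind : ∀ x ∈ W.support, ∀ y ∈ W.support, G.Adj x y → s(x,y) = s(a,b) ∨ s(x,y) ∈ W.edges) :
    ∀ e, e ∈ c.edges ↔ (e = s(a,b) ∨ e ∈ W.edges) := by
  have hab : G.Adj a b := c.adj_of_mem_edges he
  set Wg : G.Walk a b := W.mapLe hle with hWg
  have hWgs : Wg.support = W.support := mapLe_support' hle W
  have hWge : Wg.edges = W.edges := mapLe_edges' hle W
  have hWgl : Wg.length = W.length := mapLe_length' hle W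
  set D : G.Walk a a := Walk.cons hab Wg.reverse with hD
  have hDcyc : D.IsCycle := by
    rw [hD, Walk.cons_isCycle_iff]
    constructor
    · exact ((Walk.mapLe_isPath hle).2 hWp).reverse
    · intro hmem
      rw [Walk.edges_reverse, List.mem_reverse, hWge] at hmem
      exact hG'ab (W.edges_subset_edgeSet hmem)
  have hDlen : 4 ≤ D.length := by
    rw [hD, Walk.length_cons, Walk.length_reverse, hWgl]
    omega
  have hDsup : ∀ x, x ∈ D.support ↔ x ∈ W.support := by
    intro x
    rw [hD, Walk.support_cons, List.mem_cons, Walk.support_reverse, List.mem_reverse, hWgs]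
    constructor
    · rintro (rfl | h)
      · exact W.start_mem_support
      · exact h
    · exact Or.inr
  have hDedge : ∀ e, e ∈ D.edges ↔ (e = s(a,b) ∨ e ∈ W.edges) := by
    intro e
    rw [hD, Walk.edges_cons, List.mem_cons, Walk.edges_reverse, List.mem_reverse, hWge]
  have hDhole : IsHole G D := by
    refine ⟨hDcyc, hDlen, ?_⟩
    intro x hx y hy hadj
    rw [hDsup] at hx hy
    rw [hDedge]
    exact hind x hx y hy hadj
  rcases hhed va a c D hc hDhole with hEq | hDisj
  · intro e
    have : e ∈ c.edges ↔ e ∈ D.edges := by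
      constructor
      · intro h'; have : e ∈ {e | e ∈ c.edges} := h'; rw [hEq] at this; exact this
      · intro h'; have : e ∈ {e | e ∈ D.edges} := h'; rw [← hEq] at this; exact this
    rw [this, hDedge]
  · exfalso
    exact hDisj s(a,b) he ((hDedge s(a,b)).2 (Or.inl rfl))

set_option maxHeartbeats 1000000 in
lemma chord_contra (hfree : K222Free G) (hhed : HoleEdgeDisjoint G)
    {va : V} {c : G.Walk va va} (hc : IsHole G c) {a b : V} (he : s(a,b) ∈ c.edges)
    (hS : Sset G c a b = ∅) {v' : V} (d : (G.deleteEdges {s(a,b)}).Walk v' v')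
    (hd : IsHole (G.deleteEdges {s(a,b)}) d) (haS : a ∈ d.support) (hbS : b ∈ d.support) :
    False := by
  obtain ⟨hdc, hdlen, hdind⟩ := hd
  have hab : G.Adj a b := c.adj_of_mem_edges he
  have hne : a ≠ b := hab.ne
  have hle : G.deleteEdges {s(a,b)} ≤ G := G.deleteEdges_le _
  have hG'ab : s(a,b) ∉ (G.deleteEdges {s(a,b)}).edgeSet := by
    rw [SimpleGraph.mem_edgeSet]
    simp [SimpleGraph.deleteEdges_adj]
  have sym_ne : ∀ {x y : V}, x ≠ a → x ≠ b → s(x,y) ≠ s(a,b) := by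
    intro x y hxa hxb h
    rw [Sym2.eq_iff] at h
    rcases h with ⟨h1, h2⟩ | ⟨h1, h2⟩
    · exact hxa h1
    · exact hxb h1
  set d1 := d.rotate _ haS with hd1
  have hc1 : d1.IsCycle := hdc.rotate haS
  have hmemE1 : ∀ e, e ∈ d1.edges ↔ e ∈ d.edges := fun e => (d.rotate_edges _ haS).mem_iff
  have hmemS1 : ∀ y, y ∈ d1.support ↔ y ∈ d.support := fun y => mem_support_rotate hdc haS
  have hb1 : b ∈ d1.support := (hmemS1 b).2 hbS
  obtain ⟨P, Q, hPQ, hPp, hQp, hdisj⟩ := cycle_split hc1 hb1 (Ne.symm hne)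
  set A2 := Q.reverse with hA2
  have hA2p : A2.IsPath := hQp.reverse
  have hA2e : ∀ e, e ∈ A2.edges ↔ e ∈ Q.edges := by
    intro e; rw [hA2, Walk.edges_reverse, List.mem_reverse]
  have hA2s : ∀ x, x ∈ A2.support ↔ x ∈ Q.support := by
    intro x; rw [hA2, Walk.support_reverse, List.mem_reverse]
  have hA2l : A2.length = Q.length := Walk.length_reverse _
  have hsplitE : ∀ e, e ∈ d1.edges ↔ (e ∈ P.edges ∨ e ∈ A2.edges) := by
    intro e; rw [← hPQ, Walk.edges_append, List.mem_append, hA2e]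
  have hPsub : ∀ x ∈ P.support, x ∈ d1.support := by
    intro x hx; rw [← hPQ]; exact Walk.subset_support_append_left _ _ hx
  have hQsub : ∀ x ∈ Q.support, x ∈ d1.support := by
    intro x hx; rw [← hPQ]; exact Walk.subset_support_append_right _ _ hx
  have hA2sub : ∀ x ∈ A2.support, x ∈ d1.support := fun x hx => hQsub x ((hA2s x).1 hx)
  have hdisj2 : ∀ x, x ∈ P.support → x ∈ A2.support → x = a ∨ x = b :=
    fun x h1 h2 => hdisj x h1 ((hA2s x).1 h2)
  have hlen1 : d1.length = d.length := length_rotate' d haS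
  have hlen12 : P.length + Q.length = d.length := by
    have h' := congr_arg Walk.length hPQ
    rw [Walk.length_append] at h'
    omega
  have hPlen2 : 2 ≤ P.length := by
    have h0 : P.length ≠ 0 := fun h0 => hne (Walk.eq_of_length_eq_zero h0)
    have h1 : P.length ≠ 1 := fun h1 => hG'ab ((SimpleGraph.mem_edgeSet _).2 (adj_of_length_one h1))
    omega
  have hA2len2 : 2 ≤ A2.length := by
    have h0 : Q.length ≠ 0 := fun h0 => hne (Walk.eq_of_length_eq_zero h0).symm
    have h1 : Q.length ≠ 1 := fun h1 =>
      hG'ab ((SimpleGraph.mem_edgeSet _).2 (adj_of_length_one h1).symm)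
    omega
  have mkInd : ∀ (W : (G.deleteEdges {s(a,b)}).Walk a b),
      (∀ x ∈ W.support, x ∈ d1.support) → (∀ e, e ∈ W.edges → e ∈ d1.edges) →
      (∀ x ∈ W.support, ∀ y ∈ W.support, s(x,y) ∈ d1.edges → s(x,y) ∈ W.edges) →
      (∀ x ∈ W.support, ∀ y ∈ W.support, G.Adj x y → s(x,y) = s(a,b) ∨ s(x,y) ∈ W.edges) := by
    intro W hsub _ hback x hx y hy hadj
    by_cases hxy : s(x,y) = s(a,b)
    · exact Or.inl hxy
    · refine Or.inr (hback x hx y hy ?_)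
      have hG'xy : (G.deleteEdges {s(a,b)}).Adj x y := by
        rw [SimpleGraph.deleteEdges_adj]
        exact ⟨hadj, by simpa using hxy⟩
      exact (hmemE1 _).2 (hdind x ((hmemS1 x).1 (hsub x hx)) y ((hmemS1 y).1 (hsub y hy)) hG'xy)
  have hbackP : ∀ x ∈ P.support, ∀ y ∈ P.support, s(x,y) ∈ d1.edges → s(x,y) ∈ P.edges := by
    intro x hx y hy hmem
    rcases (hsplitE _).1 hmem with h | h
    · exact h
    · exfalso
      have hxq : x ∈ A2.support := A2.fst_mem_support_of_mem_edges h
      have hyq : y ∈ A2.support := A2.snd_mem_support_of_mem_edges h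
      have hadj : G.Adj x y := hle (((G.deleteEdges {s(a,b)}).mem_edgeSet).1
        ((Walk.edges_subset_edgeSet A2) h))
      have hxyne : s(x,y) ≠ s(a,b) := fun heq => hG'ab (heq ▸ (Walk.edges_subset_edgeSet A2) h)
      rcases hdisj2 x hx hxq with rfl | rfl <;> rcases hdisj2 y hy hyq with rfl | rfl
      · exact G.loopless.irrefl _ hadj
      · exact hxyne rfl
      · exact hxyne Sym2.eq_swap
      · exact G.loopless.irrefl _ hadj
  have hbackA2 : ∀ x ∈ A2.support, ∀ y ∈ A2.support, s(x,y) ∈ d1.edges → s(x,y) ∈ A2.edges := by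
    intro x hx y hy hmem
    rcases (hsplitE _).1 hmem with h | h
    · exfalso
      have hxq : x ∈ P.support := P.fst_mem_support_of_mem_edges h
      have hyq : y ∈ P.support := P.snd_mem_support_of_mem_edges h
      have hadj : G.Adj x y := hle (((G.deleteEdges {s(a,b)}).mem_edgeSet).1
        ((Walk.edges_subset_edgeSet P) h))
      have hxyne : s(x,y) ≠ s(a,b) := fun heq => hG'ab (heq ▸ (Walk.edges_subset_edgeSet P) h)
      rcases hdisj2 x hxq hx with rfl | rfl <;> rcases hdisj2 y hyq hy with rfl | rfl
      · exact G.loopless.irrefl _ hadj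
      · exact hxyne rfl
      · exact hxyne Sym2.eq_swap
      · exact G.loopless.irrefl _ hadj
    · exact h
  have hindP := mkInd P hPsub (fun e heP => (hsplitE e).2 (Or.inl heP)) hbackP
  have hindA2 := mkInd A2 hA2sub (fun e heA => (hsplitE e).2 (Or.inr heA)) hbackA2
  have midLem : ∀ (R : (G.deleteEdges {s(a,b)}).Walk a b), R.IsPath → R.length = 2 →
      ∃ m, R.support = [a, m, b] ∧ R.edges = [s(a,m), s(m,b)] ∧ m ∈ holeNbrs G c ∧
        m ∉ c.support ∧ m ≠ a ∧ m ≠ b := by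
    intro R hp hl2
    obtain ⟨m, h2, r, hRr⟩ := exists_cons_of_ne hne R
    have hrlen : r.length = 1 := by rw [hRr, Walk.length_cons] at hl2; omega
    have hmb : (G.deleteEdges {s(a,b)}).Adj m b := adj_of_length_one hrlen
    obtain ⟨b', h3, r', hrr⟩ := exists_cons_of_ne hmb.ne r
    have hr0 : r'.length = 0 := by rw [hrr, Walk.length_cons] at hrlen; omega
    have hb' : b' = b := Walk.eq_of_length_eq_zero hr0
    subst hb'
    have hr'supp : r'.support = [b'] := by
      have htl : r'.support.tail = [] := by
        rw [← List.length_eq_zero_iff, List.length_tail, r'.length_support, hr0]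
      rw [r'.support_eq_cons, htl]
    have hsupp : R.support = [a, m, b'] := by
      rw [hRr, hrr, Walk.support_cons, Walk.support_cons, hr'supp]
    have hr'edges : r'.edges = [] := by
      rw [← List.length_eq_zero_iff, Walk.length_edges, hr0]
    have hedges : R.edges = [s(a,m), s(m,b')] := by
      rw [hRr, hrr, Walk.edges_cons, Walk.edges_cons, hr'edges]
    have hGam : G.Adj a m := hle h2
    have hGmb : G.Adj m b' := hle h3
    obtain ⟨hN, hns⟩ := apex_of_T hc he hS hGam hGmb hmb.ne
    exact ⟨m, hsupp, hedges, hN, hns, h2.ne', hmb.ne⟩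
  have caseMix : ∀ (W1 W2 : (G.deleteEdges {s(a,b)}).Walk a b), W1.IsPath → W2.IsPath →
      W1.length = 2 → 3 ≤ W2.length →
      (∀ x ∈ W1.support, x ∈ d1.support) → (∀ x ∈ W2.support, x ∈ d1.support) →
      (∀ x ∈ W2.support, ∀ y ∈ W2.support, G.Adj x y → s(x,y) = s(a,b) ∨ s(x,y) ∈ W2.edges) →
      False := by
    intro W1 W2 hp1 hp2 hl1 hl2 hsub1 hsub2 hindW2
    obtain ⟨m, hs1, he1, hN, hns, hma, hmb⟩ := midLem W1 hp1 hl1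
    have hiff := holeArc hhed hc he hle hG'ab W2 hp2 hl2 hindW2
    have hysup : ∀ y ∈ c.support, y ∈ d.support := by
      intro y hy
      obtain ⟨e, hec, hye⟩ := exists_edge_of_cycle_support hc.1 hy
      rcases (hiff e).1 hec with rfl | hA
      · rcases Sym2.mem_iff.1 hye with rfl | rfl
        · exact haS
        · exact hbS
      · exact (hmemS1 y).1 (hsub2 y (mem_support_of_mem_edges'' hA hye))
    have hmd : m ∈ d.support := by
      refine (hmemS1 m).1 (hsub1 m ?_)
      rw [hs1]; simp
    obtain ⟨y₁, y₂, y₃, hy1, hy2, hy3, h12, h13, h23⟩ :=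
      list_three hc.1.support_nodup (by
        have := c.length_support
        have := hc.2.1
        simp only [List.length_tail]
        omega)
    have hys : ∀ y ∈ c.support.tail, y ∈ c.support := fun y hy => List.mem_of_mem_tail hy
    have hedge : ∀ y ∈ c.support.tail, s(m,y) ∈ d.edges := by
      intro y hy
      have hyc : y ∈ c.support := hys y hy
      have hadj : G.Adj m y := hN y hyc
      have hyne : s(m,y) ≠ s(a,b) := sym_ne hma hmb
      have hG'my : (G.deleteEdges {s(a,b)}).Adj m y := by
        rw [SimpleGraph.deleteEdges_adj]
        exact ⟨hadj, by simpa using hyne⟩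
      exact hdind m hmd y (hysup y hyc) hG'my
    obtain ⟨α, β, hαβ, hiffm⟩ := cycle_nbrs hdc hmd
    have c1 := (hiffm y₁).1 (hedge y₁ hy1)
    have c2 := (hiffm y₂).1 (hedge y₂ hy2)
    have c3 := (hiffm y₃).1 (hedge y₃ hy3)
    rcases c1 with h1 | h1 <;> rcases c2 with h2 | h2 <;> rcases c3 with h3 | h3 <;>
      first
        | exact h12 (h1.trans h2.symm)
        | exact h13 (h1.trans h3.symm)
        | exact h23 (h2.trans h3.symm)
  rcases Nat.lt_or_ge P.length 3 with hP3 | hP3 <;> rcases Nat.lt_or_ge A2.length 3 with hQ3 | hQ3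
  · -- both arcs have length 2
    obtain ⟨m₁, hs1, he1, hN1, hns1, hm1a, hm1b⟩ := midLem P hPp (by omega)
    obtain ⟨m₂, hs2, he2, hN2, hns2, hm2a, hm2b⟩ := midLem A2 hA2p (by omega)
    have hm1P : m₁ ∈ P.support := by rw [hs1]; simp
    have hm2A : m₂ ∈ A2.support := by rw [hs2]; simp
    have hne12 : m₁ ≠ m₂ := by
      rintro rfl
      rcases hdisj2 m₁ hm1P hm2A with rfl | rfl
      · exact hm1a rfl
      · exact hm1b rfl
    have hnadj : ¬ G.Adj m₁ m₂ := by
      intro hadj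
      have hxyne : s(m₁,m₂) ≠ s(a,b) := sym_ne hm1a hm1b
      have hG'xy : (G.deleteEdges {s(a,b)}).Adj m₁ m₂ := by
        rw [SimpleGraph.deleteEdges_adj]
        exact ⟨hadj, by simpa using hxyne⟩
      have hm1d : m₁ ∈ d.support := (hmemS1 m₁).1 (hPsub m₁ hm1P)
      have hm2d : m₂ ∈ d.support := (hmemS1 m₂).1 (hA2sub m₂ hm2A)
      have hmem : s(m₁,m₂) ∈ d1.edges := (hmemE1 _).2 (hdind m₁ hm1d m₂ hm2d hG'xy)
      rcases (hsplitE _).1 hmem with h | h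
      · rw [he1] at h
        simp only [List.mem_cons, List.not_mem_nil, or_false, List.mem_singleton,
          Sym2.eq_iff] at h
        rcases h with (⟨h1, h2⟩ | ⟨h1, h2⟩) | (⟨h1, h2⟩ | ⟨h1, h2⟩)
        · exact hm1a h1
        · exact hm2a h2
        · exact hm2b h2
        · exact hm1b h1
      · rw [he2] at h
        simp only [List.mem_cons, List.not_mem_nil, or_false, List.mem_singleton,
          Sym2.eq_iff] at h
        rcases h with (⟨h1, h2⟩ | ⟨h1, h2⟩) | (⟨h1, h2⟩ | ⟨h1, h2⟩)
        · exact hm1a h1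
        · exact hne12 h1
        · exact hne12 h1
        · exact hm1b h1
    exact two_apex_contra hfree hhed hc hN1 hN2 hns1 hns2 hne12 hnadj
  · exact caseMix P A2 hPp hA2p (by omega) hQ3 hPsub hA2sub hindA2
  · exact caseMix A2 P hA2p hPp (by omega) hP3 hA2sub hPsub hindP
  · -- both arcs have length ≥ 3
    have hiffP := holeArc hhed hc he hle hG'ab P hPp hP3 hindP
    have hiffA := holeArc hhed hc he hle hG'ab A2 hA2p hQ3 hindA2
    obtain ⟨m, h2, r, hPr⟩ := exists_cons_of_ne hne P
    have hma : m ≠ a := h2.ne'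
    have hmb : m ≠ b := by
      rintro rfl
      have hrp : r.IsPath := by
        have h' := hPp
        rw [hPr, Walk.cons_isPath_iff] at h'
        exact h'.1
      have := path_closed_nil hrp
      rw [Walk.nil_iff_length_eq] at this
      rw [hPr, Walk.length_cons, this] at hP3
      omega
    have hedge : s(a,m) ∈ P.edges := by rw [hPr]; simp
    have hce : s(a,m) ∈ c.edges := (hiffP s(a,m)).2 (Or.inr hedge)
    rcases (hiffA s(a,m)).1 hce with heq | hA
    · exact hmb (Sym2.congr_right.1 heq)
    · have hmA2 : m ∈ A2.support := A2.snd_mem_support_of_mem_edges hA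
      have hmP : m ∈ P.support := by
        rw [hPr, Walk.support_cons]
        exact List.mem_cons_of_mem _ r.start_mem_support
      rcases hdisj2 m hmP hmA2 with rfl | rfl
      · exact hma rfl
      · exact hmb rfl

set_option maxHeartbeats 1000000 in
theorem deleteEdge_of_Sset_empty'
    {V : Type u} [Fintype V] (G : SimpleGraph V) (hfree : K222Free G)
    (hhed : HoleEdgeDisjoint G) {v : V} (c : G.Walk v v) (hc : IsHole G c)
    {a b : V} (he : s(a, b) ∈ c.edges) (hS : Sset G c a b = ∅) :
    K222Free (G.deleteEdges {s(a, b)}) ∧ HoleEdgeDisjoint (G.deleteEdges {s(a, b)}) ∧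
      holeCount (G.deleteEdges {s(a, b)}) ≤ holeCount G - 1 := by
  classical
  have hab : G.Adj a b := c.adj_of_mem_edges he
  have hne : a ≠ b := hab.ne
  have hle : G.deleteEdges {s(a,b)} ≤ G := G.deleteEdges_le _
  have KEY : ∀ (v' : V) (d : (G.deleteEdges {s(a,b)}).Walk v' v'),
      IsHole (G.deleteEdges {s(a,b)}) d → IsHole G (d.mapLe hle) := by
    intro v' d hd
    obtain ⟨hdc, hdlen, hdind⟩ := hd
    refine ⟨(Walk.mapLe_isCycle hle).2 hdc, by rw [mapLe_length']; exact hdlen, ?_⟩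
    intro x hx y hy hxy
    rw [mapLe_support'] at hx hy
    rw [mapLe_edges']
    by_cases hxyab : s(x,y) = s(a,b)
    · exfalso
      have haS : a ∈ d.support ∧ b ∈ d.support := by
        rw [Sym2.eq_iff] at hxyab
        rcases hxyab with ⟨rfl, rfl⟩ | ⟨rfl, rfl⟩
        · exact ⟨hx, hy⟩
        · exact ⟨hy, hx⟩
      exact chord_contra hfree hhed hc he hS d ⟨hdc, hdlen, hdind⟩ haS.1 haS.2
    · refine hdind x hx y hy ?_
      rw [SimpleGraph.deleteEdges_adj]
      exact ⟨hxy, by simpa using hxyab⟩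
  refine ⟨?_, ?_, ?_⟩
  · -- K222-freeness of G - e
    rintro ⟨f, hinj, hiso⟩
    by_cases hcase : (∃ p, f p = a) ∧ (∃ q, f q = b)
    · obtain ⟨⟨p, hp⟩, ⟨q, hq⟩⟩ := hcase
      have hpq : p ≠ q := fun h => hne (by rw [← hp, ← hq, h])
      have hK : ¬ K222.Adj p q := by
        intro hK
        have h' := (hiso p q).2 hK
        rw [hp, hq, SimpleGraph.deleteEdges_adj] at h'
        exact h'.2 (by simp)
      have hpq1 : p.1 = q.1 := by
        by_contra h
        exact hK h
      obtain ⟨j, k, hjk, hji, hki⟩ : ∃ j k : Fin 3, j ≠ k ∧ j ≠ p.1 ∧ k ≠ p.1 := by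
        have : ∀ i : Fin 3, ∃ j k : Fin 3, j ≠ k ∧ j ≠ i ∧ k ≠ i := by decide
        exact this p.1
      have haux : ∀ idx : Fin 3 × Fin 2, idx.1 ≠ p.1 →
          G.Adj a (f idx) ∧ G.Adj (f idx) b ∧ f idx ≠ a ∧ f idx ≠ b := by
        intro idx hidx
        have h1 : (G.deleteEdges {s(a,b)}).Adj (f p) (f idx) :=
          (hiso p idx).2 (Ne.symm hidx)
        have h2 : (G.deleteEdges {s(a,b)}).Adj (f idx) (f q) :=
          (hiso idx q).2 (show idx.1 ≠ q.1 by rw [← hpq1]; exact hidx)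
        rw [hp] at h1
        rw [hq] at h2
        exact ⟨hle h1, hle h2, h1.ne', h2.ne⟩
      have hapex : ∀ idx : Fin 3 × Fin 2, idx.1 ≠ p.1 →
          f idx ∈ holeNbrs G c ∧ f idx ∉ c.support := by
        intro idx hidx
        obtain ⟨ha1, ha2, ha3, ha4⟩ := haux idx hidx
        exact apex_of_T hc he hS ha1 ha2 ha4
      have hnadjpair : ∀ i : Fin 3, i ≠ p.1 → ¬ G.Adj (f (i,0)) (f (i,1)) := by
        intro i hi hadj
        have hne' : s(f (i,0), f (i,1)) ≠ s(a,b) := by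
          intro heq
          rw [Sym2.eq_iff] at heq
          rcases heq with ⟨h1, _⟩ | ⟨h1, _⟩
          · exact (haux (i,0) hi).2.2.1 h1
          · exact (haux (i,0) hi).2.2.2 h1
        have : (G.deleteEdges {s(a,b)}).Adj (f (i,0)) (f (i,1)) := by
          rw [SimpleGraph.deleteEdges_adj]
          exact ⟨hadj, by simpa using hne'⟩
        have := (hiso (i,0) (i,1)).1 this
        exact this rfl
      have hcross : ∀ (s₁ s₂ : Fin 2), G.Adj (f (j,s₁)) (f (k,s₂)) :=
        fun s₁ s₂ => hle ((hiso (j,s₁) (k,s₂)).2 hjk)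
      have hwne : ∀ (s₁ s₂ : Fin 2), s₁ ≠ s₂ → ∀ i, f (i,s₁) ≠ f (i,s₂) := by
        intro s₁ s₂ hs i h
        have := hinj h
        rw [Prod.mk.injEq] at this
        exact hs this.2
      obtain ⟨z, hzs, hza, hznadj⟩ := ex_nonadj hc.1 (c.fst_mem_support_of_mem_edges he) hc.2.1
      have ha_s : a ∈ c.support := c.fst_mem_support_of_mem_edges he
      have hnadjaz : ¬ G.Adj a z := fun h => hznadj (hc.2.2 a ha_s z hzs h)
      obtain ⟨hN1, hs1⟩ := hapex (j,0) hji
      obtain ⟨hN2, hs2⟩ := hapex (j,1) hji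
      obtain ⟨hN3, hs3⟩ := hapex (k,0) hki
      obtain ⟨hN4, hs4⟩ := hapex (k,1) hki
      exact k222_contra hfree (hnadjpair j hji) (hnadjpair k hki) hnadjaz
        (hwne 0 1 (by decide) j) (hwne 0 1 (by decide) k) (Ne.symm hza)
        (hcross 0 0) (hcross 0 1) (hcross 1 0) (hcross 1 1)
        ((haux (j,0) hji).1.symm) (hN1 z hzs) ((haux (j,1) hji).1.symm) (hN2 z hzs)
        ((haux (k,0) hki).1.symm) (hN3 z hzs) ((haux (k,1) hki).1.symm) (hN4 z hzs)
    · apply hfree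
      refine ⟨f, hinj, fun p q => ?_⟩
      rw [← hiso p q, SimpleGraph.deleteEdges_adj]
      constructor
      · intro h
        refine ⟨h, ?_⟩
        simp only [Set.mem_singleton_iff]
        intro heq
        rw [Sym2.eq_iff] at heq
        rcases heq with ⟨h1, h2⟩ | ⟨h1, h2⟩
        · exact hcase ⟨⟨p, h1⟩, ⟨q, h2⟩⟩
        · exact hcase ⟨⟨q, h2⟩, ⟨p, h1⟩⟩
      · exact fun h => h.1
  · -- hole-edge-disjointness of G - e
    intro u w d₁ d₂ h₁ h₂
    rcases hhed u w _ _ (KEY u d₁ h₁) (KEY w d₂ h₂) with hEq | hDisj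
    · left
      rw [show (d₁.mapLe hle).edges = d₁.edges from mapLe_edges' hle d₁,
        show (d₂.mapLe hle).edges = d₂.edges from mapLe_edges' hle d₂] at hEq
      exact hEq
    · right
      intro e he1 he2
      exact hDisj e (by rw [mapLe_edges']; exact he1) (by rw [mapLe_edges']; exact he2)
  · -- hole count
    set A : Set (Set (Sym2 V)) :=
      {s | ∃ (vw : V) (cw : G.Walk vw vw), IsHole G cw ∧ s = {e | e ∈ cw.edges}} with hA
    set A' : Set (Set (Sym2 V)) :=
      {s | ∃ (vw : V) (cw : (G.deleteEdges {s(a,b)}).Walk vw vw),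
        IsHole (G.deleteEdges {s(a,b)}) cw ∧ s = {e | e ∈ cw.edges}} with hA'
    have hcount1 : holeCount (G.deleteEdges {s(a,b)}) = A'.ncard := rfl
    have hcount2 : holeCount G = A.ncard := rfl
    have hs0 : ({e | e ∈ c.edges} : Set (Sym2 V)) ∈ A := ⟨v, c, hc, rfl⟩
    have hsub : A' ⊆ A \ {({e | e ∈ c.edges} : Set (Sym2 V))} := by
      rintro s ⟨vw, d, hd, rfl⟩
      constructor
      · refine ⟨vw, d.mapLe hle, KEY vw d hd, ?_⟩
        ext e
        simp only [Set.mem_setOf_eq, mapLe_edges']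
      · simp only [Set.mem_singleton_iff]
        intro hcontra
        have : s(a,b) ∈ ({e | e ∈ d.edges} : Set (Sym2 V)) := by
          rw [hcontra]
          exact he
        have : s(a,b) ∈ (G.deleteEdges {s(a,b)}).edgeSet := d.edges_subset_edgeSet this
        rw [SimpleGraph.mem_edgeSet, SimpleGraph.deleteEdges_adj] at this
        exact this.2 (by simp)
    have hfin : A.Finite := Set.toFinite _
    rw [hcount1, hcount2]
    calc A'.ncard ≤ (A \ {({e | e ∈ c.edges} : Set (Sym2 V))}).ncard :=
          Set.ncard_le_ncard hsub hfin.diff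
      _ = A.ncard - 1 := Set.ncard_diff_singleton_of_mem hs0

end AuxForStatement4

/-- If `S_{C,e} = ∅`, then `G − e` is a `K_{2,2,2}`-free hole-edge-disjoint
graph with `h(G − e) ≤ h(G) − 1`. -/
theorem deleteEdge_of_Sset_empty
    {V : Type u} [Fintype V] (G : SimpleGraph V) (hfree : K222Free G)
    (hhed : HoleEdgeDisjoint G) {v : V} (c : G.Walk v v) (hc : IsHole G c)
    {a b : V} (he : s(a, b) ∈ c.edges) (hS : Sset G c a b = ∅) :
    K222Free (G.deleteEdges {s(a, b)}) ∧ HoleEdgeDisjoint (G.deleteEdges {s(a, b)}) ∧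
      holeCount (G.deleteEdges {s(a, b)}) ≤ holeCount G - 1 :=
  deleteEdge_of_Sset_empty' G hfree hhed c hc he hS
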